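/- The quaternion twist tree produces the correct quaternion basis products: letting e : ℕ → ℍ[ℝ] be given by e 0 = 1, e 1 = i, e 2 = j, e 3 = k in the real quaternions, for all natural numbers p, q < 4 one has (e p) * (e q) = ω_3(p,q) • e (p ⊕ q), where ⊕ is bitwise XOR. -/

import Mathlib

/-- The five states of the Cayley–Dickson twist tree:
corner (C), top (T), left (L), diagonal (D) and interior (I). -/
inductive TwistState : Type
  | C | T | L | D | I
deriving DecidableEq

open TwistState

/-- The interior-node sign `i_k(a,b)` for the doubling product `P_k`, `k ∈ {0,1,2,3}`. -/
def iTwist (k : ℕ) (a b : Bool) : ℤ :=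
  match k with
  | 0 => if a = false ∧ b = false then -1 else 1
  | 1 => -1
  | 2 => 1
  | _ => if a = false ∧ b = false then 1 else -1

/-- One step of the twist-tree finite-state computation: from the current
(state, sign) pair, read a doublet of bits `(a, b)` and move to the new
(state, sign) pair. -/
def twistStep (k : ℕ) : TwistState × ℤ → Bool × Bool → TwistState × ℤ
  | (C, s), (false, false) => (C, s)
  | (C, s), (false, true)  => (T, s)
  | (C, s), (true, false)  => (L, s)
  | (C, s), (true, true)   => (D, -s)
  | (T, s), (false, false) => (T, s)
  | (T, s), (false, true)  => (T, s)
  | (T, s), (true, false)  => (I, s)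
  | (T, s), (true, true)   => (I, -s)
  | (L, s), (false, false) => (L, s)
  | (L, s), (false, true)  => (I, -s)
  | (L, s), (true, false)  => (L, s)
  | (L, s), (true, true)   => (I, s)
  | (D, s), (false, false) => (D, s)
  | (D, s), (false, true)  => (I, -s)
  | (D, s), (true, false)  => (I, s)
  | (D, s), (true, true)   => (D, s)
  | (I, s), (a, b)         => (I, s * iTwist k a b)

/-- The Cayley–Dickson twist `ω_k(p,q)` for the doubling product `P_k`:
write `p` and `q` in binary with a common number of bits (padding with
leading zeros), read the doublets of bits from most significant to least
significant, running the twist-tree automaton starting at state `C` with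
sign `+1`; the result is the final sign. -/
def omegaTwist (k : ℕ) (p q : ℕ) : ℤ :=
  (((List.range (max (Nat.size p) (Nat.size q))).reverse.map
      (fun i => (p.testBit i, q.testBit i))).foldl (twistStep k) (C, 1)).2

open Quaternion in
/-- The quaternion basis vectors: `e 0 = 1`, `e 1 = i`, `e 2 = j`, `e 3 = k`
in the real quaternions. -/
noncomputable def quatBasis : ℕ → ℍ[ℝ]
  | 0 => 1
  | 1 => ⟨0, 1, 0, 0⟩
  | 2 => ⟨0, 0, 1, 0⟩
  | 3 => ⟨0, 0, 0, 1⟩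
  | _ => 0

def omegaTable : ℕ → ℕ → ℤ
  | 0, _ => 1
  | _, 0 => 1
  | 1, 1 => -1
  | 1, 2 => 1
  | 1, 3 => -1
  | 2, 1 => -1
  | 2, 2 => -1
  | 2, 3 => 1
  | 3, 1 => 1
  | 3, 2 => -1
  | 3, 3 => -1
  | _, _ => 0

lemma size_two : Nat.size 2 = 2 :=
  le_antisymm (Nat.size_le.2 (by norm_num)) (Nat.lt_size.2 (by norm_num))

lemma size_three : Nat.size 3 = 2 :=
  le_antisymm (Nat.size_le.2 (by norm_num)) (Nat.lt_size.2 (by norm_num))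

lemma omegaTwist_eq_table : ∀ p < 4, ∀ q < 4, omegaTwist 3 p q = omegaTable p q := by
  intro p hp q hq
  interval_cases p <;> interval_cases q <;>
    simp only [omegaTwist, Nat.size_zero, Nat.size_one, size_two, size_three] <;> decide

lemma quatBasis_zero : (quatBasis 0).re = 1 ∧ (quatBasis 0).imI = 0 ∧ (quatBasis 0).imJ = 0 ∧
    (quatBasis 0).imK = 0 := ⟨rfl, rfl, rfl, rfl⟩
lemma quatBasis_one : (quatBasis 1).re = 0 ∧ (quatBasis 1).imI = 1 ∧ (quatBasis 1).imJ = 0 ∧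
    (quatBasis 1).imK = 0 := ⟨rfl, rfl, rfl, rfl⟩
lemma quatBasis_two : (quatBasis 2).re = 0 ∧ (quatBasis 2).imI = 0 ∧ (quatBasis 2).imJ = 1 ∧
    (quatBasis 2).imK = 0 := ⟨rfl, rfl, rfl, rfl⟩
lemma quatBasis_three : (quatBasis 3).re = 0 ∧ (quatBasis 3).imI = 0 ∧ (quatBasis 3).imJ = 0 ∧
    (quatBasis 3).imK = 1 := ⟨rfl, rfl, rfl, rfl⟩

/-- The quaternion twist tree produces the correct quaternion basis products:
for all `p, q < 4`, `(e p) * (e q) = ω_3(p,q) • e (p ⊕ q)`, where `⊕` is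
bitwise XOR. -/
theorem quatBasis_mul :
    ∀ p q : ℕ, p < 4 → q < 4 →
      quatBasis p * quatBasis q = omegaTwist 3 p q • quatBasis (p ^^^ q) := by
  intro p q hp hq
  rw [omegaTwist_eq_table p hp q hq]
  interval_cases p <;> interval_cases q <;>
    simp [quatBasis_zero, quatBasis_one, quatBasis_two, quatBasis_three, omegaTable, Quaternion.ext_iff,
      Quaternion.re_mul, Quaternion.imI_mul,
      Quaternion.imJ_mul, Quaternion.imK_mul, Quaternion.re_smul, Quaternion.imI_smul,
      Quaternion.imJ_smul, Quaternion.imK_smul]
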